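/- Suppose for each j = 1,…,n, (R_j, B_j, L_j) is a Riesz sequence triple with bounds C_j ≤ D_j. Then with 𝐑_n = R_n⋯R_1, 𝐁_n = R_n⋯R_2(B_1) + ⋯ + B_n, and Λ_n = L_1 + R_1ᵀ(L_2) + ⋯ + (R_1ᵀ⋯R_{n-1}ᵀ)(L_n), the triple (𝐑_n, 𝐁_n, Λ_n) forms a Riesz sequence triple with bounds ∏_{j=1}^n C_j and ∏_{j=1}^n D_j. -/

import Mathlib

open Complex Matrix Finset

noncomputable section

/-- Real version of an integer matrix. -/
def realMat {d : ℕ} (R : Matrix (Fin d) (Fin d) ℤ) : Matrix (Fin d) (Fin d) ℝ :=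
  R.map (Int.cast)

/-- `R` is expanding: all (complex) eigenvalues have modulus strictly greater than 1. -/
def Expanding {d : ℕ} (R : Matrix (Fin d) (Fin d) ℤ) : Prop :=
  ∀ z : ℂ, (R.map (Int.cast : ℤ → ℂ)).charpoly.IsRoot z → 1 < ‖z‖

/-- Euclidean inner product on `ℝ^d`. -/
def ip {d : ℕ} (x y : Fin d → ℝ) : ℝ := ∑ i, x i * y i

/-- The vector `e_{R,λ} = (1/√#B) (e^{2πi⟨R⁻¹b,λ⟩})_{b∈B} ∈ ℂ^{#B}`. -/
def eVec {d : ℕ} (R : Matrix (Fin d) (Fin d) ℤ) (B : Finset (Fin d → ℤ))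
    (lam : Fin d → ℤ) : B → ℂ :=
  fun b => ((Real.sqrt B.card : ℂ))⁻¹ *
    Complex.exp (2 * Real.pi * Complex.I *
      (ip ((realMat R)⁻¹ *ᵥ (fun j => ((b : Fin d → ℤ) j : ℝ))) (fun i => (lam i : ℝ))))

/-- `(R,B,L)` is a frame triple with bounds `C ≤ D`. -/
def IsFrameTriple {d : ℕ} (R : Matrix (Fin d) (Fin d) ℤ) (B L : Finset (Fin d → ℤ))
    (C D : ℝ) : Prop :=
  ∀ x : B → ℂ,
    C * ∑ b, ‖x b‖ ^ 2 ≤ ∑ lam ∈ L, ‖∑ b, x b * (starRingEnd ℂ) (eVec R B lam b)‖ ^ 2 ∧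
    ∑ lam ∈ L, ‖∑ b, x b * (starRingEnd ℂ) (eVec R B lam b)‖ ^ 2 ≤ D * ∑ b, ‖x b‖ ^ 2

/-- `(R,B,L)` is a Riesz sequence triple with bounds `C ≤ D`. -/
def IsRieszTriple {d : ℕ} (R : Matrix (Fin d) (Fin d) ℤ) (B L : Finset (Fin d → ℤ))
    (C D : ℝ) : Prop :=
  ∀ a : L → ℂ,
    C * ∑ lam, ‖a lam‖ ^ 2 ≤ ∑ b, ‖∑ lam, a lam * eVec R B lam b‖ ^ 2 ∧
    ∑ b, ‖∑ lam, a lam * eVec R B lam b‖ ^ 2 ≤ D * ∑ lam, ‖a lam‖ ^ 2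


/-- `𝐑_n = R_n ⋯ R_1` (with 0-based indexing: `bigR R n = R (n-1) * ⋯ * R 0`). -/
def bigR {d : ℕ} (R : ℕ → Matrix (Fin d) (Fin d) ℤ) : ℕ → Matrix (Fin d) (Fin d) ℤ
  | 0 => 1
  | n + 1 => R n * bigR R n

def castVec {d : ℕ} (v : Fin d → ℤ) : Fin d → ℝ := fun i => (v i : ℝ)

/-- The point `𝐑_n⁻¹𝐛 = ∑_{k=1}^n 𝐑_k⁻¹ b_k` associated to a digit tuple. -/
def tuplePoint {d n : ℕ} (R : ℕ → Matrix (Fin d) (Fin d) ℤ) (B : ℕ → Finset (Fin d → ℤ))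
    (t : (j : Fin n) → (B (j : ℕ))) : Fin d → ℝ :=
  ∑ j : Fin n, (realMat (bigR R ((j : ℕ) + 1)))⁻¹ *ᵥ castVec (t j)

/-- The frequency `λ = ∑_{k=1}^n (R_1ᵀ⋯R_{k-1}ᵀ) l_k ∈ Λ_n` associated to a tuple. -/
def tupleFreq {d n : ℕ} (R : ℕ → Matrix (Fin d) (Fin d) ℤ) (L : ℕ → Finset (Fin d → ℤ))
    (l : (j : Fin n) → (L (j : ℕ))) : Fin d → ℤ :=
  ∑ j : Fin n, (bigR R (j : ℕ))ᵀ *ᵥ ((l j : Fin d → ℤ))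

/-- The concatenated exponential vector entry
`(1/√(∏ #B_j)) e^{2πi ⟨𝐑_n⁻¹𝐛, λ⟩}` for the triple `(𝐑_n, 𝐁_n, Λ_n)`. -/
def bigEVec {d n : ℕ} (R : ℕ → Matrix (Fin d) (Fin d) ℤ) (B L : ℕ → Finset (Fin d → ℤ))
    (t : (j : Fin n) → (B (j : ℕ))) (l : (j : Fin n) → (L (j : ℕ))) : ℂ :=
  ((Real.sqrt (∏ j ∈ Finset.range n, ((B j).card : ℝ)) : ℂ))⁻¹ *
    Complex.exp (2 * Real.pi * Complex.I *
      (ip (tuplePoint R B t) (castVec (tupleFreq R L l))))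


-- ==================== auxiliary lemmas ====================

lemma expanding_det_isUnit {d : ℕ} {M : Matrix (Fin d) (Fin d) ℤ} (h : Expanding M) :
    IsUnit (realMat M).det := by
  have hdet : M.det ≠ 0 := by
    intro h0
    have hc : (M.map (Int.cast : ℤ → ℂ)).det = 0 := by
      have h1 := (RingHom.map_det (Int.castRingHom ℂ) M)
      rw [h0] at h1
      simpa [RingHom.mapMatrix_apply] using h1.symm
    have hroot : (M.map (Int.cast : ℤ → ℂ)).charpoly.IsRoot 0 := by
      have h2 := Matrix.det_eq_sign_charpoly_coeff (M.map (Int.cast : ℤ → ℂ))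
      rw [hc] at h2
      have h3 : (M.map (Int.cast : ℤ → ℂ)).charpoly.coeff 0 = 0 := by
        rcases mul_eq_zero.mp h2.symm with h4 | h4
        · exact absurd h4 (pow_ne_zero _ (by norm_num))
        · exact h4
      simpa [Polynomial.IsRoot, ← Polynomial.coeff_zero_eq_eval_zero] using h3
    have := h 0 hroot
    norm_num at this
  have hre : (realMat M).det = (M.det : ℝ) := by
    have := (RingHom.map_det (Int.castRingHom ℝ) M).symm
    simpa [RingHom.mapMatrix_apply, realMat] using this
  rw [hre]
  exact isUnit_iff_ne_zero.mpr (by exact_mod_cast hdet)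

lemma realMat_mul {d : ℕ} (A B : Matrix (Fin d) (Fin d) ℤ) :
    realMat (A * B) = realMat A * realMat B := by
  simpa [realMat, RingHom.mapMatrix_apply] using
    (RingHom.mapMatrix (Int.castRingHom ℝ)).map_mul A B

lemma bigR_succ_shift {d : ℕ} (R : ℕ → Matrix (Fin d) (Fin d) ℤ) (m : ℕ) :
    bigR R (m + 1) = bigR (fun j => R (j + 1)) m * R 0 := by
  induction m with
  | zero => simp [bigR]
  | succ k ihk =>
      show R (k+1) * bigR R (k+1) = _
      rw [ihk]
      show _ = (fun j => R (j+1)) k * bigR (fun j => R (j+1)) k * R 0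
      rw [Matrix.mul_assoc]

lemma ip_add_left {d : ℕ} (x y z : Fin d → ℝ) : ip (x + y) z = ip x z + ip y z := by
  simp [ip, add_mul, Finset.sum_add_distrib]

lemma ip_add_right {d : ℕ} (x y z : Fin d → ℝ) : ip x (y + z) = ip x y + ip x z := by
  simp [ip, mul_add, Finset.sum_add_distrib]

lemma ip_transpose_mulVec {d : ℕ} (A : Matrix (Fin d) (Fin d) ℝ) (x y : Fin d → ℝ) :
    ip x (Aᵀ *ᵥ y) = ip (A *ᵥ x) y := by
  show dotProduct x (Aᵀ *ᵥ y) = dotProduct (A *ᵥ x) y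
  rw [Matrix.dotProduct_mulVec, Matrix.vecMul_transpose]

lemma ip_castVec {d : ℕ} (u v : Fin d → ℤ) :
    ip (castVec u) (castVec v) = ((∑ i, u i * v i : ℤ) : ℝ) := by
  simp [ip, castVec]

lemma castVec_add {d : ℕ} (u v : Fin d → ℤ) :
    castVec (u + v) = castVec u + castVec v := by
  funext i; simp [castVec]

lemma castVec_mulVec {d : ℕ} (A : Matrix (Fin d) (Fin d) ℤ) (v : Fin d → ℤ) :
    castVec (A *ᵥ v) = realMat A *ᵥ castVec v := by
  funext i; simp [castVec, realMat, Matrix.mulVec, dotProduct]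

lemma realMat_transpose {d : ℕ} (A : Matrix (Fin d) (Fin d) ℤ) :
    realMat (Aᵀ) = (realMat A)ᵀ := by
  funext i j; simp [realMat, Matrix.transpose]

lemma mulVec_sum' {d : ℕ} {ι : Type*} (s : Finset ι) (A : Matrix (Fin d) (Fin d) ℝ)
    (f : ι → (Fin d → ℝ)) : A *ᵥ (∑ j ∈ s, f j) = ∑ j ∈ s, A *ᵥ f j := by
  classical
  induction s using Finset.induction with
  | empty => simp
  | insert _ _ h ih => rw [Finset.sum_insert h, Finset.sum_insert h, Matrix.mulVec_add, ih]

lemma mulVec_sum'' {d : ℕ} {ι : Type*} (s : Finset ι) (A : Matrix (Fin d) (Fin d) ℤ)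
    (f : ι → (Fin d → ℤ)) : A *ᵥ (∑ j ∈ s, f j) = ∑ j ∈ s, A *ᵥ f j := by
  classical
  induction s using Finset.induction with
  | empty => simp
  | insert _ _ h ih => rw [Finset.sum_insert h, Finset.sum_insert h, Matrix.mulVec_add, ih]

lemma tuplePoint_cons {d n : ℕ} (R : ℕ → Matrix (Fin d) (Fin d) ℤ)
    (B : ℕ → Finset (Fin d → ℤ)) (b0 : (B 0)) (t' : (i : Fin n) → (B ((i:ℕ)+1))) :
    tuplePoint R B (Fin.cons b0 t') =
      (realMat (R 0))⁻¹ *ᵥ (castVec (b0 : Fin d → ℤ) +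
        tuplePoint (fun j => R (j+1)) (fun j => B (j+1)) t') := by
  unfold tuplePoint
  rw [Fin.sum_univ_succ, Matrix.mulVec_add]
  congr 1
  · have h0 : bigR R (0+1) = R 0 := by simp [bigR]
    simp only [Fin.cons_zero, Fin.val_zero]
    rw [h0]
    rfl
  · rw [mulVec_sum']
    refine Finset.sum_congr rfl fun i _ => ?_
    have h1 : bigR R ((i:ℕ)+1+1) = bigR (fun j => R (j+1)) ((i:ℕ)+1) * R 0 :=
      bigR_succ_shift R _
    simp only [Fin.cons_succ, Fin.val_succ]
    rw [h1, realMat_mul, Matrix.mul_inv_rev, ← Matrix.mulVec_mulVec]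
    rfl

lemma tupleFreq_cons {d n : ℕ} (R : ℕ → Matrix (Fin d) (Fin d) ℤ)
    (L : ℕ → Finset (Fin d → ℤ)) (lam0 : (L 0)) (l' : (i : Fin n) → (L ((i:ℕ)+1))) :
    tupleFreq R L (Fin.cons lam0 l') =
      (lam0 : Fin d → ℤ) + (R 0)ᵀ *ᵥ tupleFreq (fun j => R (j+1)) (fun j => L (j+1)) l' := by
  unfold tupleFreq
  rw [Fin.sum_univ_succ]
  congr 1
  · simp only [Fin.cons_zero, Fin.val_zero]
    rw [show bigR R 0 = 1 from rfl]
    simp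
    rfl
  · rw [mulVec_sum'']
    refine Finset.sum_congr rfl fun i _ => ?_
    simp only [Fin.cons_succ, Fin.val_succ]
    rw [bigR_succ_shift, Matrix.transpose_mul, ← Matrix.mulVec_mulVec]
    rfl

lemma bigEVec_cons {d n : ℕ} (R : ℕ → Matrix (Fin d) (Fin d) ℤ)
    (B L : ℕ → Finset (Fin d → ℤ)) (hdet0 : IsUnit (realMat (R 0)).det)
    (b0 : (B 0)) (t' : (i : Fin n) → (B ((i:ℕ)+1)))
    (lam0 : (L 0)) (l' : (i : Fin n) → (L ((i:ℕ)+1))) :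
    bigEVec R B L (Fin.cons b0 t') (Fin.cons lam0 l') =
      eVec (R 0) (B 0) (lam0 : Fin d → ℤ) b0 *
        (Complex.exp (2 * Real.pi * Complex.I *
            (ip ((realMat (R 0))⁻¹ *ᵥ tuplePoint (fun j => R (j+1)) (fun j => B (j+1)) t')
              (castVec (lam0 : Fin d → ℤ)))) *
          bigEVec (fun j => R (j+1)) (fun j => B (j+1)) (fun j => L (j+1)) t' l') := by
  have hsqrt : ((Real.sqrt (∏ j ∈ Finset.range (n+1), ((B j).card : ℝ)) : ℂ))⁻¹
      = ((Real.sqrt ((B 0).card) : ℂ))⁻¹ *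
        ((Real.sqrt (∏ j ∈ Finset.range n, ((B (j+1)).card : ℝ)) : ℂ))⁻¹ := by
    rw [Finset.prod_range_succ', mul_comm, Real.sqrt_mul (by positivity)]
    push_cast
    rw [mul_inv]
  have hm : ip (castVec (b0 : Fin d → ℤ))
        (castVec (tupleFreq (fun j => R (j+1)) (fun j => L (j+1)) l'))
      = ((∑ i, (b0 : Fin d → ℤ) i *
          tupleFreq (fun j => R (j+1)) (fun j => L (j+1)) l' i : ℤ) : ℝ) :=
    ip_castVec _ _
  have hip : ip (tuplePoint R B (Fin.cons b0 t'))
        (castVec (tupleFreq R L (Fin.cons lam0 l')))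
      = ip ((realMat (R 0))⁻¹ *ᵥ castVec (b0 : Fin d → ℤ)) (castVec (lam0 : Fin d → ℤ))
        + ip ((realMat (R 0))⁻¹ *ᵥ tuplePoint (fun j => R (j+1)) (fun j => B (j+1)) t')
            (castVec (lam0 : Fin d → ℤ))
        + (ip (tuplePoint (fun j => R (j+1)) (fun j => B (j+1)) t')
            (castVec (tupleFreq (fun j => R (j+1)) (fun j => L (j+1)) l'))
          + ((∑ i, (b0 : Fin d → ℤ) i *
              tupleFreq (fun j => R (j+1)) (fun j => L (j+1)) l' i : ℤ) : ℝ)) := by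
    rw [tuplePoint_cons, tupleFreq_cons, castVec_add, castVec_mulVec, realMat_transpose]
    rw [ip_add_right, ip_transpose_mulVec, Matrix.mulVec_mulVec,
      Matrix.mul_nonsing_inv _ hdet0, Matrix.one_mulVec, Matrix.mulVec_add,
      ip_add_left, ip_add_left, hm]
    ring
  unfold bigEVec eVec
  rw [hip, hsqrt]
  rw [Complex.ofReal_add, Complex.ofReal_add, Complex.ofReal_add, Complex.ofReal_intCast]
  rw [mul_add, mul_add, mul_add, Complex.exp_add, Complex.exp_add, Complex.exp_add]
  rw [show (2 * (Real.pi:ℂ) * Complex.I *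
      ((∑ i, (b0 : Fin d → ℤ) i *
        tupleFreq (fun j => R (j+1)) (fun j => L (j+1)) l' i : ℤ) : ℂ))
      = ((∑ i, (b0 : Fin d → ℤ) i *
        tupleFreq (fun j => R (j+1)) (fun j => L (j+1)) l' i : ℤ) : ℂ) *
        (2 * (Real.pi:ℂ) * Complex.I) by ring,
    Complex.exp_int_mul_two_pi_mul_I]
  rw [show (fun j => (((b0 : Fin d → ℤ)) j : ℝ)) = castVec (b0 : Fin d → ℤ) from rfl,
      show (fun i => (((lam0 : Fin d → ℤ)) i : ℝ)) = castVec (lam0 : Fin d → ℤ) from rfl]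
  ring

lemma sum_pi_succ {M : Type*} [AddCommMonoid M] {n : ℕ} (α : Fin (n+1) → Type*)
    [∀ j, Fintype (α j)] [∀ j, DecidableEq (α j)] (f : (∀ j, α j) → M) :
    ∑ x, f x = ∑ a : α 0, ∑ y : (∀ i : Fin n, α i.succ), f (Fin.cons a y) := by
  rw [← Equiv.sum_comp (Fin.consEquiv α) f, Fintype.sum_prod_type]
  rfl

lemma norm_exp_two_pi_I (x : ℝ) : ‖Complex.exp (2 * Real.pi * Complex.I * x)‖ = 1 := by
  rw [Complex.norm_exp]
  have : (2 * (Real.pi:ℂ) * Complex.I * (x:ℂ)).re = 0 := by simp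
  rw [this, Real.exp_zero]

-- ==================== main theorem ====================

theorem riesz_triple_concatenation {d n : ℕ}
    (R : ℕ → Matrix (Fin d) (Fin d) ℤ) (B L : ℕ → Finset (Fin d → ℤ)) (C D : ℕ → ℝ)
    (hexp : ∀ j, Expanding (R j))
    (h0B : ∀ j, (0 : Fin d → ℤ) ∈ B j) (h0L : ∀ j, (0 : Fin d → ℤ) ∈ L j)
    (hCD : ∀ j, 0 < C j ∧ C j ≤ D j)
    (htriple : ∀ j < n, IsRieszTriple (R j) (B j) (L j) (C j) (D j)) :
    ∀ a : ((j : Fin n) → (L (j : ℕ))) → ℂ,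
      (∏ j ∈ Finset.range n, C j) * ∑ l, ‖a l‖ ^ 2 ≤
        ∑ t : (j : Fin n) → (B (j : ℕ)), ‖∑ l, a l * bigEVec R B L t l‖ ^ 2 ∧
      ∑ t : (j : Fin n) → (B (j : ℕ)), ‖∑ l, a l * bigEVec R B L t l‖ ^ 2 ≤
        (∏ j ∈ Finset.range n, D j) * ∑ l, ‖a l‖ ^ 2 := by
  revert R B L C D
  induction n with
  | zero =>
      intro R B L C D hexp h0B h0L hCD htriple a
      have h1 : ∀ (t : (j : Fin 0) → (B (j : ℕ))) (l : (j : Fin 0) → (L (j : ℕ))),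
          bigEVec R B L t l = 1 := by
        intro t l
        simp [bigEVec, tuplePoint, tupleFreq, ip, castVec]
      constructor
      · simp [h1, Fintype.sum_unique]
      · simp [h1, Fintype.sum_unique]
  | succ n ih =>
      intro R B L C D hexp h0B h0L hCD htriple a
      have ih' := ih (fun j => R (j+1)) (fun j => B (j+1)) (fun j => L (j+1))
        (fun j => C (j+1)) (fun j => D (j+1)) (fun j => hexp (j+1)) (fun j => h0B (j+1))
        (fun j => h0L (j+1)) (fun j => hCD (j+1)) (fun j hj => htriple (j+1) (by omega))
      have h0 := htriple 0 (Nat.succ_pos n)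
      have hdet0 : IsUnit (realMat (R 0)).det := expanding_det_isUnit (hexp 0)
      have hC0 : 0 < C 0 := (hCD 0).1
      -- inner sum identity
      have hinner : ∀ (b0 : (B 0)) (t' : (i : Fin n) → (B ((i:ℕ)+1))),
          (∑ l : (j : Fin (n+1)) → (L (j:ℕ)), a l * bigEVec R B L (Fin.cons b0 t') l)
            = ∑ lam0 : (L 0),
                (Complex.exp (2 * Real.pi * Complex.I *
                    (ip ((realMat (R 0))⁻¹ *ᵥ
                        tuplePoint (fun j => R (j+1)) (fun j => B (j+1)) t')
                      (castVec (lam0 : Fin d → ℤ))))) *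
                  (∑ l' : (i : Fin n) → (L ((i:ℕ)+1)), a (Fin.cons lam0 l') *
                    bigEVec (fun j => R (j+1)) (fun j => B (j+1)) (fun j => L (j+1)) t' l')
                * eVec (R 0) (B 0) (lam0 : Fin d → ℤ) b0 := by
        intro b0 t'
        rw [sum_pi_succ (fun j : Fin (n+1) => ((L (j:ℕ)) : Type _))
          (fun l => a l * bigEVec R B L (Fin.cons b0 t') l)]
        refine Finset.sum_congr rfl fun lam0 _ => ?_
        rw [Finset.mul_sum, Finset.sum_mul]
        refine Finset.sum_congr rfl fun l' _ => ?_
        rw [bigEVec_cons R B L hdet0 b0 t' lam0 l']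
        ring
      -- total sum identity
      have hS : (∑ t : (j : Fin (n+1)) → (B (j:ℕ)),
            ‖∑ l : (j : Fin (n+1)) → (L (j:ℕ)), a l * bigEVec R B L t l‖^2)
          = ∑ t' : (i : Fin n) → (B ((i:ℕ)+1)), ∑ b0 : (B 0),
              ‖∑ lam0 : (L 0),
                (Complex.exp (2 * Real.pi * Complex.I *
                    (ip ((realMat (R 0))⁻¹ *ᵥ
                        tuplePoint (fun j => R (j+1)) (fun j => B (j+1)) t')
                      (castVec (lam0 : Fin d → ℤ))))) *
                  (∑ l' : (i : Fin n) → (L ((i:ℕ)+1)), a (Fin.cons lam0 l') *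
                    bigEVec (fun j => R (j+1)) (fun j => B (j+1)) (fun j => L (j+1)) t' l')
                * eVec (R 0) (B 0) (lam0 : Fin d → ℤ) b0‖^2 := by
        rw [sum_pi_succ (fun j : Fin (n+1) => ((B (j:ℕ)) : Type _))
          (fun t => ‖∑ l : (j : Fin (n+1)) → (L (j:ℕ)), a l * bigEVec R B L t l‖^2)]
        rw [Finset.sum_comm]
        exact Finset.sum_congr rfl fun t' _ => Finset.sum_congr rfl fun b0 _ => by
          rw [hinner b0 t']
      -- norm of coefficients
      have hcnorm : ∀ (t' : (i : Fin n) → (B ((i:ℕ)+1))) (lam0 : (L 0)),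
          ‖(Complex.exp (2 * Real.pi * Complex.I *
              (ip ((realMat (R 0))⁻¹ *ᵥ
                  tuplePoint (fun j => R (j+1)) (fun j => B (j+1)) t')
                (castVec (lam0 : Fin d → ℤ))))) *
            (∑ l' : (i : Fin n) → (L ((i:ℕ)+1)), a (Fin.cons lam0 l') *
              bigEVec (fun j => R (j+1)) (fun j => B (j+1)) (fun j => L (j+1)) t' l')‖^2
          = ‖∑ l' : (i : Fin n) → (L ((i:ℕ)+1)), a (Fin.cons lam0 l') *
              bigEVec (fun j => R (j+1)) (fun j => B (j+1)) (fun j => L (j+1)) t' l'‖^2 := by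
        intro t' lam0
        rw [norm_mul, norm_exp_two_pi_I, one_mul]
      -- sum of coefficient norms
      have haSum : (∑ l : (j : Fin (n+1)) → (L (j:ℕ)), ‖a l‖^2)
          = ∑ lam0 : (L 0), ∑ l' : (i : Fin n) → (L ((i:ℕ)+1)), ‖a (Fin.cons lam0 l')‖^2 :=
        sum_pi_succ (fun j : Fin (n+1) => ((L (j:ℕ)) : Type _)) (fun l => ‖a l‖^2)
      have hg2 : ∀ (lam0 : (L 0)),
          (∑ t' : (i : Fin n) → (B ((i:ℕ)+1)),
            ‖∑ l' : (i : Fin n) → (L ((i:ℕ)+1)), a (Fin.cons lam0 l') *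
              bigEVec (fun j => R (j+1)) (fun j => B (j+1)) (fun j => L (j+1)) t' l'‖^2)
          ∈ Set.Icc
            ((∏ j ∈ Finset.range n, C (j+1)) *
              ∑ l' : (i : Fin n) → (L ((i:ℕ)+1)), ‖a (Fin.cons lam0 l')‖^2)
            ((∏ j ∈ Finset.range n, D (j+1)) *
              ∑ l' : (i : Fin n) → (L ((i:ℕ)+1)), ‖a (Fin.cons lam0 l')‖^2) := by
        intro lam0
        exact ⟨(ih' (fun l' => a (Fin.cons lam0 l'))).1, (ih' (fun l' => a (Fin.cons lam0 l'))).2⟩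
      rw [hS, haSum, Finset.prod_range_succ' C n, Finset.prod_range_succ' D n]
      constructor
      · calc (∏ j ∈ Finset.range n, C (j+1)) * C 0 *
              ∑ lam0 : (L 0), ∑ l' : (i : Fin n) → (L ((i:ℕ)+1)), ‖a (Fin.cons lam0 l')‖^2
            = C 0 * ∑ lam0 : (L 0), (∏ j ∈ Finset.range n, C (j+1)) *
                ∑ l' : (i : Fin n) → (L ((i:ℕ)+1)), ‖a (Fin.cons lam0 l')‖^2 := by
              rw [Finset.mul_sum, Finset.mul_sum]
              exact Finset.sum_congr rfl fun lam0 _ => by ring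
          _ ≤ C 0 * ∑ lam0 : (L 0), ∑ t' : (i : Fin n) → (B ((i:ℕ)+1)),
                ‖∑ l' : (i : Fin n) → (L ((i:ℕ)+1)), a (Fin.cons lam0 l') *
                  bigEVec (fun j => R (j+1)) (fun j => B (j+1)) (fun j => L (j+1)) t' l'‖^2 := by
              refine mul_le_mul_of_nonneg_left (Finset.sum_le_sum fun lam0 _ => ?_) hC0.le
              exact (hg2 lam0).1
          _ = ∑ t' : (i : Fin n) → (B ((i:ℕ)+1)), C 0 * ∑ lam0 : (L 0),
                ‖(Complex.exp (2 * Real.pi * Complex.I *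
                    (ip ((realMat (R 0))⁻¹ *ᵥ
                        tuplePoint (fun j => R (j+1)) (fun j => B (j+1)) t')
                      (castVec (lam0 : Fin d → ℤ))))) *
                  (∑ l' : (i : Fin n) → (L ((i:ℕ)+1)), a (Fin.cons lam0 l') *
                    bigEVec (fun j => R (j+1)) (fun j => B (j+1)) (fun j => L (j+1)) t' l')‖^2 := by
              rw [Finset.sum_comm, Finset.mul_sum]
              exact Finset.sum_congr rfl fun t' _ => by
                congr 1
                exact Finset.sum_congr rfl fun lam0 _ => (hcnorm t' lam0).symm
          _ ≤ ∑ t' : (i : Fin n) → (B ((i:ℕ)+1)), ∑ b0 : (B 0),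
                ‖∑ lam0 : (L 0),
                  (Complex.exp (2 * Real.pi * Complex.I *
                      (ip ((realMat (R 0))⁻¹ *ᵥ
                          tuplePoint (fun j => R (j+1)) (fun j => B (j+1)) t')
                        (castVec (lam0 : Fin d → ℤ))))) *
                    (∑ l' : (i : Fin n) → (L ((i:ℕ)+1)), a (Fin.cons lam0 l') *
                      bigEVec (fun j => R (j+1)) (fun j => B (j+1)) (fun j => L (j+1)) t' l')
                  * eVec (R 0) (B 0) (lam0 : Fin d → ℤ) b0‖^2 :=
              Finset.sum_le_sum fun t' _ => (h0 _).1
      · calc (∑ t' : (i : Fin n) → (B ((i:ℕ)+1)), ∑ b0 : (B 0),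
                ‖∑ lam0 : (L 0),
                  (Complex.exp (2 * Real.pi * Complex.I *
                      (ip ((realMat (R 0))⁻¹ *ᵥ
                          tuplePoint (fun j => R (j+1)) (fun j => B (j+1)) t')
                        (castVec (lam0 : Fin d → ℤ))))) *
                    (∑ l' : (i : Fin n) → (L ((i:ℕ)+1)), a (Fin.cons lam0 l') *
                      bigEVec (fun j => R (j+1)) (fun j => B (j+1)) (fun j => L (j+1)) t' l')
                  * eVec (R 0) (B 0) (lam0 : Fin d → ℤ) b0‖^2)
            ≤ ∑ t' : (i : Fin n) → (B ((i:ℕ)+1)), D 0 * ∑ lam0 : (L 0),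
                ‖(Complex.exp (2 * Real.pi * Complex.I *
                    (ip ((realMat (R 0))⁻¹ *ᵥ
                        tuplePoint (fun j => R (j+1)) (fun j => B (j+1)) t')
                      (castVec (lam0 : Fin d → ℤ))))) *
                  (∑ l' : (i : Fin n) → (L ((i:ℕ)+1)), a (Fin.cons lam0 l') *
                    bigEVec (fun j => R (j+1)) (fun j => B (j+1)) (fun j => L (j+1)) t' l')‖^2 :=
              Finset.sum_le_sum fun t' _ => (h0 _).2
          _ = D 0 * ∑ lam0 : (L 0), ∑ t' : (i : Fin n) → (B ((i:ℕ)+1)),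
                ‖∑ l' : (i : Fin n) → (L ((i:ℕ)+1)), a (Fin.cons lam0 l') *
                  bigEVec (fun j => R (j+1)) (fun j => B (j+1)) (fun j => L (j+1)) t' l'‖^2 := by
              rw [← Finset.mul_sum]
              congr 1
              rw [Finset.sum_comm]
              exact Finset.sum_congr rfl fun lam0 _ =>
                Finset.sum_congr rfl fun t' _ => hcnorm t' lam0
          _ ≤ D 0 * ∑ lam0 : (L 0), (∏ j ∈ Finset.range n, D (j+1)) *
                ∑ l' : (i : Fin n) → (L ((i:ℕ)+1)), ‖a (Fin.cons lam0 l')‖^2 := by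
              refine mul_le_mul_of_nonneg_left (Finset.sum_le_sum fun lam0 _ => ?_)
                (lt_of_lt_of_le hC0 (hCD 0).2).le
              exact (hg2 lam0).2
          _ = (∏ j ∈ Finset.range n, D (j+1)) * D 0 *
                ∑ lam0 : (L 0), ∑ l' : (i : Fin n) → (L ((i:ℕ)+1)), ‖a (Fin.cons lam0 l')‖^2 := by
              rw [Finset.mul_sum, Finset.mul_sum]
              exact Finset.sum_congr rfl fun lam0 _ => by ring


end
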